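/- Let p be an odd prime, q = p^l, and m an odd positive integer. For a ∈ F_q, b ∈ F_q^*, c ∈ F_{q^m}, define Ω(a,b,c) = Σ_{z ∈ F_q^*} χ(za) Σ_{y ∈ F_{q^m}} χ'(-zby² + zcy) where χ, χ' are the canonical additive characters of F_q and F_{q^m}. Then Ω(a,b,c) = 0 if a + Tr_{q^m/q}(c²/(4b)) = 0; Ω(a,b,c) = q^{(m+1)/2}·(-1)^{l(p-1)(m+1)/4} if a + Tr_{q^m/q}(c²/(4b)) ≠ 0 and η'(-b)·η(a + Tr_{q^m/q}(c²/(4b))) = 1; and Ω(a,b,c) = q^{(m+1)/2}·(-1)^{(l(p-1)(m+1)+4)/4} if a + Tr_{q^m/q}(c²/(4b)) ≠ 0 and η'(-b)·η(a + Tr_{q^m/q}(c²/(4b))) = -1. -/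

import Mathlib

open scoped Classical
open Finset

/-- The quadratic character of a finite field, extended by `η 0 = 0`. -/
noncomputable def quadChar {F : Type*} [Field F] (c : F) : ℤ :=
  if c = 0 then 0 else if IsSquare c then 1 else -1

/-- ℕ helper: for odd `q`, `q ^ m / 2 = (q / 2) * S` with `S ≡ m [MOD 2]`. -/
lemma aux_half_pow (q : ℕ) (hq : Odd q) :
    ∀ m : ℕ, ∃ S : ℕ, S % 2 = m % 2 ∧ q ^ m / 2 = q / 2 * S := by
  obtain ⟨B, hB⟩ := id hq
  intro m
  induction m with
  | zero => exact ⟨0, rfl, by simp⟩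
  | succ m ih =>
      obtain ⟨S, hS, hdiv⟩ := ih
      obtain ⟨A, hA⟩ := (Odd.pow hq : Odd (q ^ m))
      refine ⟨2 * A + S + 1, by omega, ?_⟩
      have hq2 : q / 2 = B := by omega
      have hA2 : q ^ m / 2 = A := by omega
      have hAS : A = B * S := by rw [← hA2, hdiv, hq2]
      have hpow : q ^ (m + 1) = 2 * (2 * A * B + A + B) + 1 := by
        rw [pow_succ, hA, hB]; ring
      rw [hpow, hq2]
      have : (2 * (2 * A * B + A + B) + 1) / 2 = 2 * A * B + A + B := by omega
      rw [this, hAS]; ring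

/-- Squares descend along odd-degree extensions of finite fields. -/
lemma aux_isSquare_algebraMap_iff {F E : Type*} [Field F] [Fintype F] [Field E] [Fintype E]
    [Algebra F E] (hch : ringChar F ≠ 2) {m : ℕ} (hm : Odd m)
    (hE : Fintype.card E = Fintype.card F ^ m) {c : F} (hc : c ≠ 0) :
    IsSquare (algebraMap F E c) ↔ IsSquare c := by
  have hchE : ringChar E = ringChar F := (Algebra.ringChar_eq F E).symm
  have hchE2 : ringChar E ≠ 2 := by rw [hchE]; exact hch
  have hqodd : Odd (Fintype.card F) := Nat.odd_iff.mpr (FiniteField.odd_card_of_char_ne_two hch)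
  have hc' : algebraMap F E c ≠ 0 := by simpa using hc
  rw [FiniteField.isSquare_iff hch hc, FiniteField.isSquare_iff hchE2 hc']
  obtain ⟨S, hS2, hSdiv⟩ := aux_half_pow (Fintype.card F) hqodd m
  have hSodd : Odd S := by rw [Nat.odd_iff, hS2, ← Nat.odd_iff]; exact hm
  rw [hE, hSdiv, ← map_pow, pow_mul]
  set t := c ^ (Fintype.card F / 2) with ht
  have htsq : t = 1 ∨ t = -1 := by
    apply mul_self_eq_one_iff.mp
    rw [ht, ← pow_add, ← two_mul]
    have h2 : 2 * (Fintype.card F / 2) = Fintype.card F - 1 := by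
      obtain ⟨j, hj⟩ := hqodd; omega
    rw [h2]
    exact FiniteField.pow_card_sub_one_eq_one c hc
  have hne1F : (-1 : F) ≠ 1 := by
    intro h
    exact Ring.neg_one_ne_one_of_char_ne_two hch h
  have hne1E : (-1 : E) ≠ 1 := by
    intro h
    exact Ring.neg_one_ne_one_of_char_ne_two hchE2 h
  rcases htsq with h | h
  · rw [h]; simp
  · rw [h, hSodd.neg_one_pow]
    simp only [map_neg, map_one]
    exact iff_of_false hne1E hne1F

/-- The complex-valued quadratic character. -/
noncomputable def quadCharC (K : Type*) [Field K] [Fintype K] : MulChar K ℂ :=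
  (quadraticChar K).ringHomComp (Int.castRingHom ℂ)

lemma quadCharC_apply {K : Type*} [Field K] [Fintype K] (a : K) :
    quadCharC K a = ((quadraticChar K a : ℤ) : ℂ) := rfl

lemma quadCharC_mul_self {K : Type*} [Field K] [Fintype K] {a : K} (ha : a ≠ 0) :
    quadCharC K a * quadCharC K a = 1 := by
  rcases quadraticChar_dichotomy ha with h | h <;>
    simp [quadCharC_apply, h]

lemma quadCharC_ne_one {K : Type*} [Field K] [Fintype K] (hch : ringChar K ≠ 2) :
    quadCharC K ≠ 1 :=
  (MulChar.ringHomComp_ne_one_iff ((Int.castRingHom ℂ).injective_int)).mpr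
    (quadraticChar_ne_one hch)

lemma sum_quadCharC_mul_psi {K : Type*} [Field K] [Fintype K]
    (ψ : AddChar K ℂ) {s : K} (hs : s ≠ 0) :
    ∑ z : K, quadCharC K z * ψ (s * z) = quadCharC K s * gaussSum (quadCharC K) ψ := by
  have h := gaussSum_mulShift (quadCharC K) ψ (Units.mk0 s hs)
  have hG : gaussSum (quadCharC K) (ψ.mulShift ((Units.mk0 s hs) : K))
      = ∑ z : K, quadCharC K z * ψ (s * z) := by
    simp [gaussSum, AddChar.mulShift_apply]
  rw [hG] at h
  calc ∑ z : K, quadCharC K z * ψ (s * z)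
      = quadCharC K s * (quadCharC K s * ∑ z : K, quadCharC K z * ψ (s * z)) := by
        rw [← mul_assoc, quadCharC_mul_self hs, one_mul]
    _ = quadCharC K s * gaussSum (quadCharC K) ψ := by
        rw [show quadCharC K s = quadCharC K ((Units.mk0 s hs : Kˣ) : K) from rfl, h]

lemma sum_psi_sq {K : Type*} [Field K] [Fintype K] (hch : ringChar K ≠ 2)
    (ψ : AddChar K ℂ) (hψ : ψ.IsPrimitive) {d : K} (hd : d ≠ 0) :
    ∑ x : K, ψ (d * x ^ 2) = quadCharC K d * gaussSum (quadCharC K) ψ := by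
  have step1 : ∑ x : K, ψ (d * x ^ 2)
      = ∑ t : K, ∑ _x ∈ univ.filter (fun x : K => x ^ 2 = t), ψ (d * t) := by
    rw [← Finset.sum_fiberwise_of_maps_to (g := fun x : K => x ^ 2)
      (fun x _ => mem_univ _) (fun x => ψ (d * x ^ 2))]
    exact Finset.sum_congr rfl fun t _ => Finset.sum_congr rfl fun x hx => by
      rw [(Finset.mem_filter.mp hx).2]
  have step2 : ∀ t : K, ∑ _x ∈ univ.filter (fun x : K => x ^ 2 = t), ψ (d * t)
      = quadCharC K t * ψ (d * t) + ψ (d * t) := by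
    intro t
    rw [Finset.sum_const, nsmul_eq_mul]
    have hcard : (((univ.filter (fun x : K => x ^ 2 = t)).card : ℤ) : ℂ)
        = ((quadraticChar K t : ℤ) : ℂ) + 1 := by
      have h1 : ((univ.filter (fun x : K => x ^ 2 = t)).card : ℤ)
          = quadraticChar K t + 1 := by
        rw [show (univ.filter (fun x : K => x ^ 2 = t)) = {x : K | x ^ 2 = t}.toFinset from
          (Set.toFinset_setOf _).symm]
        exact_mod_cast quadraticChar_card_sqrts hch t
      exact_mod_cast congrArg (fun n : ℤ => (n : ℂ)) h1
    push_cast at hcard ⊢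
    rw [hcard, quadCharC_apply]; ring
  rw [step1, Finset.sum_congr rfl fun t _ => step2 t, Finset.sum_add_distrib]
  have hzero : ∑ t : K, ψ (d * t) = 0 := by
    have h0 : ∑ t : K, ψ.mulShift d t = 0 :=
      AddChar.sum_eq_zero_of_ne_one (hψ hd)
    simpa [AddChar.mulShift_apply] using h0
  rw [hzero, add_zero]
  exact sum_quadCharC_mul_psi ψ hd

lemma AddChar.map_sum' {A M : Type*} [AddCommMonoid A] [CommMonoid M] (ψ : AddChar A M)
    {ι : Type*} (s : Finset ι) (f : ι → A) : ψ (∑ i ∈ s, f i) = ∏ i ∈ s, ψ (f i) := by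
  induction s using Finset.cons_induction with
  | empty => simp
  | cons i s hi ih => rw [Finset.sum_cons, Finset.prod_cons, AddChar.map_add_eq_mul, ih]

lemma aux_gauss_lift {F E : Type*} [Field F] [Fintype F] [Field E] [Fintype E] [Algebra F E]
    (hch : ringChar F ≠ 2) (hm : Odd (Module.finrank F E))
    (ψ : AddChar F ℂ) (hψ : ψ.IsPrimitive) :
    ∑ y : E, ψ (Algebra.trace F E (y * y))
      = gaussSum (quadCharC F) ψ ^ Module.finrank F E := by
  haveI : Invertible (2 : F) := invertibleOfNonzero (Ring.two_ne_zero hch)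
  set n := Module.finrank F E with hn
  obtain ⟨w, ⟨iso⟩⟩ := QuadraticForm.equivalent_weightedSumSquares
    (Q := LinearMap.BilinMap.toQuadraticMap (Algebra.traceForm F E))
  set W := QuadraticMap.weightedSumSquares F w with hWdef
  set g : E ≃ₗ[F] (Fin n → F) := iso.toLinearEquiv with hgdef
  have hsymm : ∀ v : Fin n → F, iso.symm v = g.symm v := fun v => rfl
  have hQg : ∀ v : Fin n → F, Algebra.trace F E (g.symm v * g.symm v) = W v := by
    intro v
    have h := iso.symm.map_app v
    rw [hsymm] at h
    rw [← Algebra.traceForm_apply, ← LinearMap.BilinMap.toQuadraticMap_apply]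
    exact h
  have hWv : ∀ v : Fin n → F, W v = ∑ i, w i * (v i * v i) := by
    intro v
    rw [hWdef, QuadraticMap.weightedSumSquares_apply]
    simp [smul_eq_mul]
  set b : Fin n → E := fun i => g.symm (Pi.single i 1) with hbdef
  have hbb : ∀ i, Algebra.trace F E (b i * b i) = w i := by
    intro i
    rw [hbdef]
    rw [hQg (Pi.single i 1), hWv]
    simp [Pi.single_apply]
  have hbij : ∀ i j, i ≠ j → Algebra.trace F E (b i * b j) = 0 := by
    intro i j hij
    have hQs : Algebra.trace F E ((b i + b j) * (b i + b j)) = w i + w j := by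
      have hadd : b i + b j = g.symm (Pi.single i 1 + Pi.single j 1) := by
        rw [hbdef, map_add]
      rw [hadd, hQg, hWv]
      set u : Fin n → F := Pi.single i 1 + Pi.single j 1 with hudef
      have hterm : ∀ k, u k * u k
          = (if k = i then (1:F) else 0) + (if k = j then 1 else 0) := by
        intro k
        simp only [hudef, Pi.add_apply, Pi.single_apply]
        by_cases h1 : k = i <;> by_cases h2 : k = j
        · exact absurd (h1.symm.trans h2) hij
        all_goals simp [h1, h2, hij, Ne.symm hij]
      rw [Finset.sum_congr rfl fun k _ => by rw [hterm k]]
      simp [mul_add, Finset.sum_add_distrib]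
    have hexp : Algebra.trace F E ((b i + b j) * (b i + b j))
        = w i + w j + (Algebra.trace F E (b i * b j) + Algebra.trace F E (b i * b j)) := by
      have : (b i + b j) * (b i + b j) = b i * b i + b j * b j + (b i * b j + b j * b i) := by
        ring
      rw [this, map_add, map_add, map_add, hbb, hbb, mul_comm (b j) (b i)]
    rw [hexp] at hQs
    have h2 : Algebra.trace F E (b i * b j) + Algebra.trace F E (b i * b j) = 0 := by
      have := hQs.trans (add_zero (w i + w j)).symm
      exact add_left_cancel this
    have := Ring.two_ne_zero hch
    have h2' : (2 : F) * Algebra.trace F E (b i * b j) = 0 := by rw [two_mul]; exact h2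
    rcases mul_eq_zero.mp h2' with h | h
    · exact absurd h this
    · exact h
  have hwne : ∀ i, w i ≠ 0 := by
    intro i hwi
    have hfun : ∀ y : E, Algebra.traceForm F E (b i) y = 0 := by
      have hB : (Algebra.traceForm F E (b i)) = (0 : E →ₗ[F] F) := by
        apply ((Pi.basisFun F (Fin n)).map g.symm).ext
        intro j
        simp only [Module.Basis.map_apply, Pi.basisFun_apply, LinearMap.zero_apply]
        change ((Algebra.traceForm F E) (b i)) (b j) = 0
        rcases eq_or_ne i j with rfl | hij
        · rw [Algebra.traceForm_apply, hbb]
          exact hwi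
        · rw [Algebra.traceForm_apply]
          exact hbij i j hij
      intro y; rw [hB]; rfl
    have hbi0 : b i = 0 := (traceForm_nondegenerate F E).1 (b i) hfun
    have h1 : (Pi.single i 1 : Fin n → F) = 0 := by
      have := congrArg g hbi0
      rw [hbdef] at this
      simpa using this
    have := congrFun h1 i
    simp at this
  have hprodne : (∏ i, w i) ≠ 0 := Finset.prod_ne_zero_iff.mpr fun i _ => hwne i
  have hsq : IsSquare (∏ i, w i) := by
    have hcardAut : Fintype.card (E ≃ₐ[F] E) = n := by
      rw [← Nat.card_eq_fintype_card]; exact IsGalois.card_aut_eq_finrank F E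
    set e : Fin n ≃ (E ≃ₐ[F] E) := (Fintype.equivFinOfCardEq hcardAut).symm with hedef
    set A : Matrix (Fin n) (Fin n) E := Matrix.of (fun k i => e k (b i)) with hAdef
    have hAA : A.transpose * A = Matrix.diagonal (fun i => algebraMap F E (w i)) := by
      ext i j
      rw [Matrix.mul_apply]
      have hsum : ∑ k, A.transpose i k * A k j = ∑ σ : E ≃ₐ[F] E, σ (b i * b j) := by
        rw [← Equiv.sum_comp e (fun σ => σ (b i * b j))]
        refine Finset.sum_congr rfl fun k _ => ?_
        rw [hAdef]
        simp only [Matrix.transpose_apply, Matrix.of_apply]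
        exact (map_mul (e k) _ _).symm
      rw [hsum, ← trace_eq_sum_automorphisms]
      rcases eq_or_ne i j with rfl | hij
      · rw [hbb, Matrix.diagonal_apply_eq]
      · rw [hbij i j hij, Matrix.diagonal_apply_ne _ hij, map_zero]
    have hdet : algebraMap F E (∏ i, w i) = Matrix.det A * Matrix.det A := by
      have hd := congrArg Matrix.det hAA
      rw [Matrix.det_mul, Matrix.det_transpose, Matrix.det_diagonal] at hd
      rw [← map_prod] at hd
      exact hd.symm
    have hcardE : Fintype.card E = Fintype.card F ^ n := Module.card_eq_pow_finrank (K := F)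
    exact (aux_isSquare_algebraMap_iff hch hm hcardE hprodne).mp ⟨Matrix.det A, hdet⟩
  calc ∑ y : E, ψ (Algebra.trace F E (y * y))
      = ∑ v : Fin n → F, ψ (Algebra.trace F E (g.symm v * g.symm v)) :=
        (Equiv.sum_comp g.symm.toEquiv (fun y => ψ (Algebra.trace F E (y * y)))).symm
    _ = ∑ v : Fin n → F, ∏ i, ψ (w i * (v i) ^ 2) := by
        refine Finset.sum_congr rfl fun v _ => ?_
        rw [hQg, hWv, AddChar.map_sum']
        exact Finset.prod_congr rfl fun i _ => by rw [sq]
    _ = ∏ i, ∑ u : F, ψ (w i * u ^ 2) := by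
        rw [Finset.prod_univ_sum]
        rw [Fintype.piFinset_univ]
    _ = ∏ i, (quadCharC F (w i) * gaussSum (quadCharC F) ψ) :=
        Finset.prod_congr rfl fun i _ => sum_psi_sq hch ψ hψ (hwne i)
    _ = (∏ i, quadCharC F (w i)) * gaussSum (quadCharC F) ψ ^ n := by
        rw [Finset.prod_mul_distrib, Finset.prod_const, Finset.card_univ, Fintype.card_fin]
    _ = gaussSum (quadCharC F) ψ ^ n := by
        have hone : ∏ i, quadCharC F (w i) = 1 := by
          rw [← map_prod (quadCharC F) w Finset.univ, quadCharC_apply,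
            (quadraticChar_one_iff_isSquare hprodne).mpr hsq]
          norm_num
        rw [hone, one_mul]

lemma quadChar_eq {K : Type*} [Field K] [Fintype K] (c : K) :
    quadChar c = quadraticChar K c := by
  by_cases h0 : c = 0
  · simp [quadChar, h0]
  by_cases hsq : IsSquare c
  · rw [(quadraticChar_one_iff_isSquare h0).mpr hsq]
    simp [quadChar, h0, hsq]
  · rw [quadraticChar_neg_one_iff_not_isSquare.mpr hsq]
    simp [quadChar, h0, hsq]

lemma quadraticChar_algebraMap {F E : Type*} [Field F] [Fintype F] [Field E] [Fintype E]
    [Algebra F E] (hch : ringChar F ≠ 2) {m : ℕ} (hm : Odd m)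
    (hE : Fintype.card E = Fintype.card F ^ m) {z : F} (hz : z ≠ 0) :
    quadraticChar E (algebraMap F E z) = quadraticChar F z := by
  have hz' : algebraMap F E z ≠ 0 := by simpa using hz
  by_cases hsq : IsSquare z
  · rw [(quadraticChar_one_iff_isSquare hz).mpr hsq,
      (quadraticChar_one_iff_isSquare hz').mpr
        ((aux_isSquare_algebraMap_iff hch hm hE hz).mpr hsq)]
  · rw [quadraticChar_neg_one_iff_not_isSquare.mpr hsq,
      quadraticChar_neg_one_iff_not_isSquare.mpr
        (fun h => hsq ((aux_isSquare_algebraMap_iff hch hm hE hz).mp h))]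


/-- for odd `q = p^l` and odd `m`, the exponential sum
`Ω(a,b,c) = ∑_{z∈F_q^*} χ(za) ∑_{y∈F_{q^m}} χ'(-zby² + zcy)` takes the stated
values, depending on `a + Tr_{q^m/q}(c²/(4b))` and the quadratic characters. -/
theorem stmt12 {F E : Type*} [Field F] [Fintype F] [Field E] [Fintype E]
    [Algebra F E] (p : ℕ) (hp : p.Prime) (hpodd : Odd p)
    [Algebra (ZMod p) F] [Algebra (ZMod p) E]
    (l m : ℕ) (hl : 0 < l) (hm : Odd m)
    (hF : Fintype.card F = p ^ l) (hE : Fintype.card E = Fintype.card F ^ m)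
    (a b : F) (hb : b ≠ 0) (c : E)
    (χ : F → ℂ) (χ' : E → ℂ)
    (hχ : ∀ x : F, χ x = Complex.exp (2 * Real.pi * Complex.I *
      (Algebra.trace (ZMod p) F x).val / p))
    (hχ' : ∀ x : E, χ' x = Complex.exp (2 * Real.pi * Complex.I *
      (Algebra.trace (ZMod p) E x).val / p))
    (Ω : ℂ)
    (hΩ : Ω = ∑ z ∈ univ.filter (fun z : F => z ≠ 0),
      χ (z * a) * ∑ y : E,
        χ' (-(algebraMap F E (z * b)) * y ^ 2 + algebraMap F E z * c * y)) :
    (a + Algebra.trace F E (c ^ 2 / (4 * algebraMap F E b)) = 0 → Ω = 0) ∧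
    (a + Algebra.trace F E (c ^ 2 / (4 * algebraMap F E b)) ≠ 0 →
      (quadChar (-(algebraMap F E b)) *
          quadChar (a + Algebra.trace F E (c ^ 2 / (4 * algebraMap F E b))) = 1 →
        Ω = (Fintype.card F : ℂ) ^ ((m + 1) / 2)
            * (-1) ^ (l * (p - 1) * (m + 1) / 4)) ∧
      (quadChar (-(algebraMap F E b)) *
          quadChar (a + Algebra.trace F E (c ^ 2 / (4 * algebraMap F E b))) = -1 →
        Ω = (Fintype.card F : ℂ) ^ ((m + 1) / 2)
            * (-1) ^ ((l * (p - 1) * (m + 1) + 4) / 4))) := by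
  haveI : Fact p.Prime := ⟨hp⟩
  haveI : NeZero p := ⟨hp.ne_zero⟩
  haveI hCF : CharP F p := charP_of_injective_algebraMap (algebraMap (ZMod p) F).injective p
  haveI hCE : CharP E p := charP_of_injective_algebraMap (algebraMap (ZMod p) E).injective p
  have hchF : ringChar F = p := ringChar.eq F p
  have hchE : ringChar E = p := ringChar.eq E p
  have hp2 : p ≠ 2 := by
    rintro rfl
    exact (by decide : ¬ Odd 2) hpodd
  have hchF2 : ringChar F ≠ 2 := by rw [hchF]; exact hp2
  have hchE2 : ringChar E ≠ 2 := by rw [hchE]; exact hp2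
  haveI : IsScalarTower (ZMod p) F E :=
    IsScalarTower.of_algebraMap_eq' (RingHom.ext_zmod _ _)
  have hq1 : 1 < Fintype.card F := Fintype.one_lt_card
  have hrank : Module.finrank F E = m := by
    have h1 : Fintype.card E = Fintype.card F ^ Module.finrank F E :=
      Module.card_eq_pow_finrank (K := F)
    rw [hE] at h1
    exact (Nat.pow_right_injective hq1 h1.symm)
  -- the additive characters
  have hprim : IsPrimitiveRoot (Complex.exp (2 * Real.pi * Complex.I / p)) p :=
    Complex.isPrimitiveRoot_exp p hp.ne_zero
  set ζ : ℂ := Complex.exp (2 * Real.pi * Complex.I / p) with hζdef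
  have hζp : ζ ^ (p : ℕ) = 1 := hprim.pow_eq_one
  set ψ₀ : AddChar (ZMod p) ℂ := AddChar.zmodChar p hζp with hψ₀def
  set ψ : AddChar F ℂ := ψ₀.compAddMonoidHom (Algebra.trace (ZMod p) F).toAddMonoidHom
    with hψdef
  set ψ' : AddChar E ℂ := ψ.compAddMonoidHom (Algebra.trace F E).toAddMonoidHom
    with hψ'def
  have hψap : ∀ x : F, ψ x = ζ ^ (Algebra.trace (ZMod p) F x).val := by
    intro x
    rw [hψdef]
    simp only [AddChar.compAddMonoidHom_apply, LinearMap.toAddMonoidHom_coe]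
    rw [hψ₀def, AddChar.zmodChar_apply]
  have hχeq : ∀ x : F, χ x = ψ x := by
    intro x
    rw [hχ x, hψap x, hζdef, ← Complex.exp_nat_mul]
    congr 1
    push_cast
    ring
  have hψ'ap : ∀ x : E, ψ' x = ψ (Algebra.trace F E x) := by
    intro x
    rw [hψ'def]
    simp only [AddChar.compAddMonoidHom_apply, LinearMap.toAddMonoidHom_coe]
  have hχ'eq : ∀ x : E, χ' x = ψ' x := by
    intro x
    rw [hχ' x, hψ'ap x, hψap, Algebra.trace_trace, hζdef, ← Complex.exp_nat_mul]
    congr 1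
    push_cast
    ring
  have hζne1 : ζ ≠ 1 := hprim.ne_one hp.one_lt
  have hψ1 : ψ ≠ 1 := by
    obtain ⟨x, hx⟩ := Algebra.trace_surjective (ZMod p) F 1
    refine AddChar.ne_one_iff.mpr ⟨x, ?_⟩
    rw [hψap x, hx, ZMod.val_one, pow_one]
    exact hζne1
  have hψprim : ψ.IsPrimitive := AddChar.IsPrimitive.of_ne_one hψ1
  have hψ'1 : ψ' ≠ 1 := by
    obtain ⟨x, hx⟩ := Algebra.trace_surjective F E 1
    obtain ⟨x₀, hx₀⟩ := Algebra.trace_surjective (ZMod p) F 1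
    refine AddChar.ne_one_iff.mpr ⟨algebraMap F E x₀ * x, ?_⟩
    have htr : Algebra.trace F E (algebraMap F E x₀ * x) = x₀ := by
      rw [show algebraMap F E x₀ * x = x₀ • x from (Algebra.smul_def x₀ x).symm,
        map_smul, hx, smul_eq_mul, mul_one]
    rw [hψ'ap, htr, hψap, hx₀, ZMod.val_one, pow_one]
    exact hζne1
  have hψ'prim : ψ'.IsPrimitive := AddChar.IsPrimitive.of_ne_one hψ'1
  set G : ℂ := gaussSum (quadCharC F) ψ with hGdef
  set G' : ℂ := gaussSum (quadCharC E) ψ' with hG'def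
  set T : F := Algebra.trace F E (c ^ 2 / (4 * algebraMap F E b)) with hT
  set s : F := a + T with hs
  -- G' = G ^ m
  have hmrank : Odd (Module.finrank F E) := by rw [hrank]; exact hm
  have hGG : G' = G ^ m := by
    have h1 : ∑ y : E, ψ' ((1 : E) * y ^ 2) = quadCharC E 1 * G' :=
      sum_psi_sq hchE2 ψ' hψ'prim one_ne_zero
    have h2 : ∑ y : E, ψ' ((1 : E) * y ^ 2) = ∑ y : E, ψ (Algebra.trace F E (y * y)) := by
      refine Finset.sum_congr rfl fun y _ => ?_
      rw [one_mul, hψ'ap, sq]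
    have h3 := aux_gauss_lift hchF2 hmrank ψ hψprim
    rw [hrank] at h3
    rw [h2, h3] at h1
    rw [MulChar.map_one, one_mul] at h1
    exact h1.symm
  -- the inner sum
  have hbE : algebraMap F E b ≠ 0 := by simpa using hb
  have h2E : (2 : E) ≠ 0 := Ring.two_ne_zero hchE2
  have h4E : (4 : E) ≠ 0 := by
    rw [show (4 : E) = 2 * 2 by norm_num]
    exact mul_ne_zero h2E h2E
  have hinner : ∀ z : F, z ≠ 0 →
      (∑ y : E, χ' (-(algebraMap F E (z * b)) * y ^ 2 + algebraMap F E z * c * y))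
      = quadCharC F z * quadCharC E (-(algebraMap F E b)) * G' * ψ (z * T) := by
    intro z hz
    have hzE : algebraMap F E z ≠ 0 := by simpa using hz
    set u : E := algebraMap F E (z * b) with hu
    have hu0 : u ≠ 0 := by
      rw [hu, map_mul]
      exact mul_ne_zero hzE hbE
    set e₀ : E := c / (2 * algebraMap F E b) with he₀
    have hshift : ∀ y : E, -u * (y + e₀) ^ 2 + algebraMap F E z * c * (y + e₀)
        = -u * y ^ 2 + algebraMap F E z * (c ^ 2 / (4 * algebraMap F E b)) := by
      intro y
      rw [hu, he₀, map_mul]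
      field_simp
      ring
    have hT' : ψ' (algebraMap F E z * (c ^ 2 / (4 * algebraMap F E b))) = ψ (z * T) := by
      rw [hψ'ap, hT]
      congr 1
      rw [show algebraMap F E z * (c ^ 2 / (4 * algebraMap F E b))
          = z • (c ^ 2 / (4 * algebraMap F E b)) from (Algebra.smul_def _ _).symm,
        map_smul, smul_eq_mul]
    calc ∑ y : E, χ' (-(algebraMap F E (z * b)) * y ^ 2 + algebraMap F E z * c * y)
        = ∑ y : E, ψ' (-u * y ^ 2 + algebraMap F E z * c * y) := by
          refine Finset.sum_congr rfl fun y _ => ?_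
          rw [hχ'eq, hu]
      _ = ∑ y : E, ψ' (-u * (y + e₀) ^ 2 + algebraMap F E z * c * (y + e₀)) :=
          (Equiv.sum_comp (Equiv.addRight e₀)
            (fun t => ψ' (-u * t ^ 2 + algebraMap F E z * c * t))).symm
      _ = ∑ y : E, ψ' (-u * y ^ 2) * ψ (z * T) := by
          refine Finset.sum_congr rfl fun y _ => ?_
          rw [hshift y, AddChar.map_add_eq_mul, hT']
      _ = (∑ y : E, ψ' (-u * y ^ 2)) * ψ (z * T) := by rw [Finset.sum_mul]
      _ = quadCharC E (-u) * G' * ψ (z * T) := by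
          rw [sum_psi_sq hchE2 ψ' hψ'prim (neg_ne_zero.mpr hu0), hG'def]
      _ = quadCharC F z * quadCharC E (-(algebraMap F E b)) * G' * ψ (z * T) := by
          have : (-u : E) = algebraMap F E z * (-(algebraMap F E b)) := by
            rw [hu, map_mul]; ring
          rw [this, map_mul]
          rw [show quadCharC E (algebraMap F E z) = quadCharC F z by
            rw [quadCharC_apply, quadCharC_apply,
              quadraticChar_algebraMap hchF2 hm hE hz]]
  -- the outer sum
  have hΩ2 : Ω = quadCharC E (-(algebraMap F E b)) * G' *
      ∑ z ∈ univ.filter (fun z : F => z ≠ 0), quadCharC F z * ψ (z * s) := by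
    rw [hΩ, Finset.mul_sum]
    refine Finset.sum_congr rfl fun z hz => ?_
    have hz0 : z ≠ 0 := (Finset.mem_filter.mp hz).2
    rw [hinner z hz0, hχeq]
    rw [hs, mul_add z a T, AddChar.map_add_eq_mul]
    ring
  have hfull : ∑ z ∈ univ.filter (fun z : F => z ≠ 0), quadCharC F z * ψ (z * s)
      = ∑ z : F, quadCharC F z * ψ (z * s) := by
    symm
    apply (Finset.sum_subset (Finset.subset_univ _) _).symm
    intro z _ hz
    have hz0 : z = 0 := by simpa using hz
    rw [hz0, MulChar.map_zero, zero_mul]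
  -- numerics setup
  set q : ℕ := Fintype.card F with hqdef
  set k : ℕ := (m + 1) / 2 with hk
  set u' : ℕ := (p - 1) / 2 with hu'
  have hm2 : m + 1 = 2 * k := by
    obtain ⟨j, hj⟩ := hm; omega
  have hp1 : p - 1 = 2 * u' := by
    obtain ⟨j, hj⟩ := hpodd; omega
  have hGsq : G ^ 2 = quadCharC F (-1) * q := by
    rw [hGdef]
    exact gaussSum_sq (quadCharC_ne_one hchF2)
      ((quadraticChar_isQuadratic F).comp _) hψprim
  have hqoddN : Odd q := Nat.odd_iff.mpr (FiniteField.odd_card_of_char_ne_two hchF2)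
  have hsign : quadCharC F (-1) = (-1 : ℂ) ^ (u' * l) := by
    obtain ⟨S', hS'2, hS'div⟩ := aux_half_pow p hpodd l
    have hq2 : q / 2 = u' * S' := by
      rw [hF, hS'div]
      have hpu : p / 2 = u' := by omega
      rw [hpu]
    have hpar : (u' * S') % 2 = (u' * l) % 2 := by
      rw [Nat.mul_mod, hS'2, ← Nat.mul_mod]
    have hq4 : q % 4 = 3 ↔ ¬ (u' * l) % 2 = 0 := by
      obtain ⟨j, hj⟩ := hqoddN
      omega
    by_cases hsq : IsSquare (-1 : F)
    · have h1 : quadraticChar F (-1) = 1 :=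
        (quadraticChar_one_iff_isSquare (neg_ne_zero.mpr one_ne_zero)).mpr hsq
      have h4 : q % 4 ≠ 3 := FiniteField.isSquare_neg_one_iff.mp hsq
      have heven : (u' * l) % 2 = 0 := by tauto
      rw [quadCharC_apply, h1, Even.neg_one_pow (Nat.even_iff.mpr heven)]
      norm_num
    · have h1 : quadraticChar F (-1) = -1 :=
        quadraticChar_neg_one_iff_not_isSquare.mpr hsq
      have h4 : q % 4 = 3 := by
        by_contra h4
        exact hsq (FiniteField.isSquare_neg_one_iff.mpr h4)
      have hodd : (u' * l) % 2 = 1 := by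
        have := hq4.mp h4
        omega
      rw [quadCharC_apply, h1, Odd.neg_one_pow (Nat.odd_iff.mpr hodd)]
      norm_num
  have hmain : ∀ ε : ℂ,
      (quadCharC E (-(algebraMap F E b)) * quadCharC F s = ε) → s ≠ 0 →
      Ω = ε * (-1 : ℂ) ^ (u' * l * k) * (q : ℂ) ^ k := by
    intro ε hε hs0
    have hsum : ∑ z : F, quadCharC F z * ψ (z * s) = quadCharC F s * G := by
      have := sum_quadCharC_mul_psi ψ (s := s) hs0
      rw [hGdef, ← this]
      refine Finset.sum_congr rfl fun z _ => by rw [mul_comm z s]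
    rw [hΩ2, hfull, hsum]
    have hpow : G * G ^ m = ((-1 : ℂ) ^ (u' * l) * (q : ℂ)) ^ k := by
      rw [← pow_succ']
      rw [show m + 1 = 2 * k from hm2, pow_mul, hGsq, hsign]
    calc quadCharC E (-(algebraMap F E b)) * G' * (quadCharC F s * G)
        = (quadCharC E (-(algebraMap F E b)) * quadCharC F s) * (G * G ^ m) := by
          rw [hGG]; ring
      _ = ε * (((-1 : ℂ) ^ (u' * l)) * (q : ℂ)) ^ k := by rw [hε, hpow]
      _ = ε * (-1 : ℂ) ^ (u' * l * k) * (q : ℂ) ^ k := by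
          rw [mul_pow, ← pow_mul]; ring
  have hexp4 : l * (p - 1) * (m + 1) = 4 * (u' * l * k) := by
    rw [hp1, hm2]; ring
  have hqcb : (quadChar (-(algebraMap F E b)) : ℂ) = quadCharC E (-(algebraMap F E b)) := by
    rw [quadChar_eq, quadCharC_apply]
  have hqcs : (quadChar s : ℂ) = quadCharC F s := by
    rw [quadChar_eq, quadCharC_apply]
  refine ⟨?_, ?_⟩
  · -- case s = 0
    intro hs0
    have hsum0 : ∑ z : F, quadCharC F z * ψ (z * s) = 0 := by
      have : ∀ z : F, quadCharC F z * ψ (z * s) = quadCharC F z := by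
        intro z
        rw [hs0, mul_zero, AddChar.map_zero_eq_one, mul_one]
      rw [Finset.sum_congr rfl fun z _ => this z]
      exact MulChar.sum_eq_zero_of_ne_one (quadCharC_ne_one hchF2)
    rw [hΩ2, hfull, hsum0, mul_zero]
  · intro hs0
    constructor
    · intro hprod
      have hε : quadCharC E (-(algebraMap F E b)) * quadCharC F s = 1 := by
        rw [← hqcb, ← hqcs]
        exact_mod_cast congrArg (fun n : ℤ => (n : ℂ)) hprod
      rw [hmain 1 hε hs0, one_mul]
      rw [show l * (p - 1) * (m + 1) / 4 = u' * l * k by rw [hexp4]; omega]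
      ring
    · intro hprod
      have hε : quadCharC E (-(algebraMap F E b)) * quadCharC F s = -1 := by
        rw [← hqcb, ← hqcs]
        exact_mod_cast congrArg (fun n : ℤ => (n : ℂ)) hprod
      rw [hmain (-1) hε hs0]
      rw [show (l * (p - 1) * (m + 1) + 4) / 4 = u' * l * k + 1 by rw [hexp4]; omega]
      rw [pow_succ]
      ring
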